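/- Consider the two-mass two-spring potentials V(q₁,q₂) = (k₁/2)(|q₁| − ℓ₁)² + (k₂/2)(|q₂ − q₁| − ℓ₂)² and Ṽ(q₁, q̃₂) = (k₁/2)(|q₁| − ℓ₁)² + (k̃₂/2)(|q̃₂ − q₁| − ℓ̃₂)², with k₂, k̃₂ > 0. Fix q₁, q₂ ∈ ℝ with q₂ − q₁ > 0. If a = (k₂/k̃₂ − 1)(q₂ − q₁) − (k₂/k̃₂)ℓ₂ + ℓ̃₂ and q₂ + a − q₁ > 0, then ∂V/∂q₁ (q₁,q₂) = ∂Ṽ/∂q₁ (q₁, q₂ + a) and ∂V/∂q₂ (q₁,q₂) = ∂Ṽ/∂q̃₂ (q₁, q₂ + a). -/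

import Mathlib

open Topology Filter

private lemma hasDerivAt_abs_sq_right (k ℓ c : ℝ) (x₀ : ℝ) (h : 0 < x₀ - c) :
    HasDerivAt (fun y => k / 2 * (|y - c| - ℓ) ^ 2) (k * (x₀ - c - ℓ)) x₀ := by
  have hsmooth : HasDerivAt (fun y => k / 2 * ((y - c) - ℓ) ^ 2) (k * (x₀ - c - ℓ)) x₀ := by
    have h1 : HasDerivAt (fun y : ℝ => y - c - ℓ) 1 x₀ :=
      ((hasDerivAt_id x₀).sub_const c).sub_const ℓ
    have h2 := (h1.fun_pow 2).const_mul (k / 2)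
    exact h2.congr_deriv (by ring)
  apply hsmooth.congr_of_eventuallyEq
  have hc : Set.Ioi c ∈ 𝓝 x₀ := Ioi_mem_nhds (by linarith)
  filter_upwards [hc] with y hy
  rw [abs_of_pos (by simp at hy; linarith)]

private lemma hasDerivAt_abs_sq_left (k ℓ c : ℝ) (x₀ : ℝ) (h : 0 < c - x₀) :
    HasDerivAt (fun x => k / 2 * (|c - x| - ℓ) ^ 2) (-(k * (c - x₀ - ℓ))) x₀ := by
  have hsmooth : HasDerivAt (fun x => k / 2 * ((c - x) - ℓ) ^ 2) (-(k * (c - x₀ - ℓ))) x₀ := by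
    have h1 : HasDerivAt (fun x : ℝ => c - x - ℓ) (-1) x₀ :=
      ((hasDerivAt_id x₀).const_sub c).sub_const ℓ
    have h2 := (h1.fun_pow 2).const_mul (k / 2)
    exact h2.congr_deriv (by ring)
  apply hsmooth.congr_of_eventuallyEq
  have hc : Set.Iio c ∈ 𝓝 x₀ := Iio_mem_nhds (by linarith)
  filter_upwards [hc] with x hx
  rw [abs_of_pos (by simp at hx; linarith)]

/-- Non-identifiability of the latent coordinate in the two--mass two--spring system:
with `V(q₁,q₂) = (k₁/2)(|q₁| − ℓ₁)² + (k₂/2)(|q₂ − q₁| − ℓ₂)²` and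
`Ṽ(q₁,q̃₂) = (k₁/2)(|q₁| − ℓ₁)² + (k̃₂/2)(|q̃₂ − q₁| − ℓ̃₂)²`, shifting the hidden mass by
`a = (k₂/k̃₂ − 1)(q₂ − q₁) − (k₂/k̃₂)ℓ₂ + ℓ̃₂` produces identical partial derivatives. -/
theorem two_mass_spring_nonidentifiable
    (k₁ k₂ kt₂ ℓ₁ ℓ₂ ℓt₂ : ℝ) (hk₂ : 0 < k₂) (hkt₂ : 0 < kt₂)
    (q₁ q₂ : ℝ) (hpos : q₂ - q₁ > 0)
    (V Vt : ℝ → ℝ → ℝ)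
    (hV : ∀ x y, V x y = k₁ / 2 * (|x| - ℓ₁) ^ 2 + k₂ / 2 * (|y - x| - ℓ₂) ^ 2)
    (hVt : ∀ x y, Vt x y = k₁ / 2 * (|x| - ℓ₁) ^ 2 + kt₂ / 2 * (|y - x| - ℓt₂) ^ 2)
    (a : ℝ) (ha : a = (k₂ / kt₂ - 1) * (q₂ - q₁) - (k₂ / kt₂) * ℓ₂ + ℓt₂)
    (hpos' : q₂ + a - q₁ > 0) :
    deriv (fun x => V x q₂) q₁ = deriv (fun x => Vt x (q₂ + a)) q₁ ∧
      deriv (fun y => V q₁ y) q₂ = deriv (fun y => Vt q₁ y) (q₂ + a) := by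
  have key : k₂ * (q₂ - q₁ - ℓ₂) = kt₂ * (q₂ + a - q₁ - ℓt₂) := by
    subst ha; field_simp; ring
  set f : ℝ → ℝ := fun x => k₁ / 2 * (|x| - ℓ₁) ^ 2 with hf
  have hg := hasDerivAt_abs_sq_left k₂ ℓ₂ q₂ q₁ hpos
  have hgt := hasDerivAt_abs_sq_left kt₂ ℓt₂ (q₂ + a) q₁ hpos'
  constructor
  · have hVfun : (fun x => V x q₂) =
        fun x => f x + k₂ / 2 * (|q₂ - x| - ℓ₂) ^ 2 := by
      funext x; rw [hV]
    have hVtfun : (fun x => Vt x (q₂ + a)) =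
        fun x => f x + kt₂ / 2 * (|q₂ + a - x| - ℓt₂) ^ 2 := by
      funext x; rw [hVt]
    rw [hVfun, hVtfun]
    by_cases hd : DifferentiableAt ℝ f q₁
    · rw [deriv_fun_add hd hg.differentiableAt, deriv_fun_add hd hgt.differentiableAt,
        hg.deriv, hgt.deriv, key]
    · have h1 : ¬ DifferentiableAt ℝ (fun x => f x + k₂ / 2 * (|q₂ - x| - ℓ₂) ^ 2) q₁ := by
        intro h
        exact hd (by simpa using h.fun_sub hg.differentiableAt)
      have h2 : ¬ DifferentiableAt ℝ (fun x => f x + kt₂ / 2 * (|q₂ + a - x| - ℓt₂) ^ 2) q₁ := by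
        intro h
        exact hd (by simpa using h.fun_sub hgt.differentiableAt)
      rw [deriv_zero_of_not_differentiableAt h1, deriv_zero_of_not_differentiableAt h2]
  · have hy := hasDerivAt_abs_sq_right k₂ ℓ₂ q₁ q₂ hpos
    have hyt := hasDerivAt_abs_sq_right kt₂ ℓt₂ q₁ (q₂ + a) hpos'
    have hVfun : (fun y => V q₁ y) =
        fun y => f q₁ + k₂ / 2 * (|y - q₁| - ℓ₂) ^ 2 := by
      funext y; rw [hV]
    have hVtfun : (fun y => Vt q₁ y) =
        fun y => f q₁ + kt₂ / 2 * (|y - q₁| - ℓt₂) ^ 2 := by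
      funext y; rw [hVt]
    rw [hVfun, hVtfun, deriv_const_add, deriv_const_add, hy.deriv, hyt.deriv, key]
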